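/- Let θ ∈ (0, π) and let D_θ = {z ∈ ℂ \ {0,1} : the angle ∠0z1 at vertex z in the triangle with vertices 0, z, 1 is greater than π − θ}. Then for any 0 < t < 1 and any z ∈ D_θ with z ∉ (−∞, 0], the principal power z^t also lies in D_θ. -/

import Mathlib

open Real


theorem crit (θ : ℝ) (hθ : θ ∈ Set.Ioo 0 π) (u v : ℂ) (hu : u ≠ 0) (hv : v ≠ 0) :
    π - θ < InnerProductGeometry.angle u v ↔
      (starRingEnd ℂ u * v).re < -Real.cos θ * (‖u‖ * ‖v‖) := by
  have hnu : (0:ℝ) < ‖u‖ := norm_pos_iff.2 hu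
  have hnv : (0:ℝ) < ‖v‖ := norm_pos_iff.2 hv
  have hca := InnerProductGeometry.cos_angle u v
  have hm1 : π - θ ∈ Set.Icc 0 π := ⟨by linarith [hθ.2], by linarith [hθ.1]⟩
  have hm2 : InnerProductGeometry.angle u v ∈ Set.Icc 0 π :=
    ⟨InnerProductGeometry.angle_nonneg u v, InnerProductGeometry.angle_le_pi u v⟩
  have h1 : π - θ < InnerProductGeometry.angle u v ↔
      Real.cos (InnerProductGeometry.angle u v) < Real.cos (π - θ) := by
    constructor
    · intro h; exact Real.strictAntiOn_cos hm1 hm2 h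
    · intro h
      by_contra hc
      push_neg at hc
      rcases lt_or_eq_of_le hc with hc | hc
      · exact absurd (Real.strictAntiOn_cos hm2 hm1 hc) (by linarith)
      · rw [hc] at h; linarith
  rw [h1, Real.cos_pi_sub, hca, Complex.inner, mul_comm v, div_lt_iff₀ (by positivity)]

theorem crit' (θ : ℝ) (hθ : θ ∈ Set.Ioo 0 π) (z : ℂ) (hz0 : z ≠ 0) (hz1 : z ≠ 1) :
    π - θ < EuclideanGeometry.angle 0 z 1 ↔
      Complex.normSq z - z.re <
        -Real.cos θ * (‖z‖ * ‖(1 - z)‖) := by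
  have h0 : (0:ℂ) - z ≠ 0 := by simpa [sub_eq_zero] using hz0
  have h1 : (1:ℂ) - z ≠ 0 := by simpa [sub_eq_zero] using (Ne.symm hz1)
  have hE : EuclideanGeometry.angle (0:ℂ) z 1 =
      InnerProductGeometry.angle ((0:ℂ) - z) (1 - z) := rfl
  rw [hE, crit θ hθ _ _ h0 h1]
  have e1 : (starRingEnd ℂ ((0:ℂ) - z) * (1 - z)).re = Complex.normSq z - z.re := by
    simp [Complex.mul_re, Complex.normSq_apply]; ring
  have e2 : ‖(0:ℂ) - z‖ = ‖z‖ := by simp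
  have e3 : ‖(1:ℂ) - z‖ = ‖(1 - z)‖ := rfl
  rw [e1, e2, e3]

theorem cpow_re' (z : ℂ) (hz : z ≠ 0) (t : ℝ) :
    (z ^ (t:ℂ)).re = ‖z‖ ^ t * Real.cos (t * z.arg) ∧
    (z ^ (t:ℂ)).im = ‖z‖ ^ t * Real.sin (t * z.arg) := by
  rw [Complex.cpow_def_of_ne_zero hz]
  have hre : (Complex.log z * (t:ℂ)).re = Real.log (‖z‖) * t := by
    simp [Complex.mul_re, Complex.log_re]
  have him : (Complex.log z * (t:ℂ)).im = z.arg * t := by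
    simp [Complex.mul_im, Complex.log_im]
  have habs : ‖z‖ ^ t = Real.exp (Real.log (‖z‖) * t) :=
    Real.rpow_def_of_pos (norm_pos_iff.2 hz) t
  constructor
  · rw [Complex.exp_re, hre, him, habs, mul_comm z.arg t]
  · rw [Complex.exp_im, hre, him, habs, mul_comm z.arg t]

theorem ineq1 (c S p q r s : ℝ) (hS : 0 < S) (hcS : c^2 + S^2 = 1) (hq : 0 < q)
    (hr : 0 < r) (hs : 0 < s) (hs2 : s^2 = (p-r)^2 + q^2)
    (h : r - p < -c*s) : r*S < S*p - c*q := by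
  rcases le_or_gt (p - r) 0 with hpr | hpr
  · have hcs : c*s < p - r := by linarith
    have hc : c < 0 := by nlinarith
    have h2 : (p-r)^2 < c^2*s^2 := by
      nlinarith [mul_pos (show (0:ℝ) < (p-r) - c*s by linarith)
        (show (0:ℝ) < -((p-r) + c*s) by nlinarith)]
    have h3 : (-(S*(p-r)))^2 < (-(c*q))^2 := by nlinarith
    have h4 : -(S*(p-r)) < -(c*q) :=
      lt_of_pow_lt_pow_left₀ 2 (by nlinarith) h3
    linarith
  · rcases le_or_gt c 0 with hc | hc
    · nlinarith [mul_nonpos_of_nonpos_of_nonneg hc hq.le, mul_pos hS hpr]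
    · have hcs : 0 < c*s := mul_pos hc hs
      have h2 : c^2*s^2 < (p-r)^2 := by
        nlinarith [mul_pos (show (0:ℝ) < (p-r) - c*s by linarith)
          (show (0:ℝ) < (p-r) + c*s by linarith)]
      have h3 : (c*q)^2 < (S*(p-r))^2 := by nlinarith
      have h4 : c*q < S*(p-r) :=
        lt_of_pow_lt_pow_left₀ 2 (by positivity) h3
      linarith

theorem ineq2 (c S p q r s : ℝ) (hS : 0 < S) (hcS : c^2 + S^2 = 1) (hq : 0 < q)
    (hr : 0 < r) (hs : 0 < s) (hs2 : s^2 = (p-r)^2 + q^2)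
    (h : r*S < S*p - c*q) : r - p < -c*s := by
  have hh : c*q < S*(p-r) := by linarith
  rcases le_or_gt (p - r) 0 with hpr | hpr
  · have hc : c < 0 := by nlinarith [mul_nonpos_of_nonneg_of_nonpos hS.le hpr]
    have h3 : (S*(p-r))^2 < (c*q)^2 := by
      nlinarith [mul_pos (show (0:ℝ) < S*(p-r) - c*q by linarith)
        (show (0:ℝ) < -(S*(p-r) + c*q) by nlinarith [mul_pos hS hS])]
    have h2 : (-(p-r))^2 < (-(c*s))^2 := by nlinarith
    have h4 : -(p-r) < -(c*s) :=
      lt_of_pow_lt_pow_left₀ 2 (by nlinarith [mul_pos (neg_pos.2 hc) hs]) h2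
    linarith
  · rcases le_or_gt c 0 with hc | hc
    · nlinarith [mul_nonpos_of_nonpos_of_nonneg hc hs.le]
    · have h3 : (c*q)^2 < (S*(p-r))^2 := by
        nlinarith [mul_pos (show (0:ℝ) < S*(p-r) - c*q by linarith)
          (show (0:ℝ) < S*(p-r) + c*q by positivity)]
      have h2 : (c*s)^2 < (p-r)^2 := by nlinarith
      have h4 : c*s < p - r := lt_of_pow_lt_pow_left₀ 2 hpr.le h2
      linarith

theorem core (θ φ t r : ℝ) (hθ : 0 < θ) (hθπ : θ < π) (hφ : 0 < φ) (hφθ : φ < θ)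
    (ht : 0 < t) (ht1 : t < 1) (hr : 0 < r)
    (h : r * Real.sin θ < Real.sin (θ - φ)) :
    r ^ t * Real.sin θ < Real.sin (θ - t*φ) := by
  have hSθ : 0 < Real.sin θ := Real.sin_pos_of_pos_of_lt_pi hθ hθπ
  have h1 : Real.sin (θ - t*φ) ≥ t * Real.sin (θ - φ) + (1-t) * Real.sin θ := by
    have hmem1 : θ - φ ∈ Set.Icc 0 π := ⟨by linarith, by linarith⟩
    have hmem2 : θ ∈ Set.Icc 0 π := ⟨hθ.le, hθπ.le⟩
    have := strictConcaveOn_sin_Icc.concaveOn.2 hmem1 hmem2 ht.le (by linarith : (0:ℝ) ≤ 1-t)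
      (by ring)
    simpa [smul_eq_mul, show t*(θ-φ) + (1-t)*θ = θ - t*φ by ring] using this
  have h2 : Real.sin (θ-φ) ^ t * Real.sin θ ^ (1-t) ≤
      t * Real.sin (θ - φ) + (1-t) * Real.sin θ := by
    apply Real.geom_mean_le_arith_mean2_weighted ht.le (by linarith)
      (by nlinarith : (0:ℝ) ≤ Real.sin (θ-φ)) hSθ.le (by ring)
  have h3 : (r * Real.sin θ) ^ t * Real.sin θ ^ (1-t) <
      Real.sin (θ-φ) ^ t * Real.sin θ ^ (1-t) := by
    apply mul_lt_mul_of_pos_right _ (Real.rpow_pos_of_pos hSθ _)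
    exact Real.rpow_lt_rpow (by positivity) h ht
  have h4 : (r * Real.sin θ) ^ t * Real.sin θ ^ (1-t) = r ^ t * Real.sin θ := by
    rw [Real.mul_rpow hr.le hSθ.le, mul_assoc, ← Real.rpow_add hSθ]
    norm_num
  linarith

theorem stmt0 (θ : ℝ) (hθ : θ ∈ Set.Ioo 0 π) (t : ℝ) (ht : 0 < t) (ht1 : t < 1)
    (z : ℂ) (hz0 : z ≠ 0) (hz1 : z ≠ 1)
    (hzD : π - θ < EuclideanGeometry.angle (0 : ℂ) z 1)
    (hzneg : ¬ (z.im = 0 ∧ z.re ≤ 0)) :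
    z ^ (t : ℂ) ≠ 0 ∧ z ^ (t : ℂ) ≠ 1 ∧
      π - θ < EuclideanGeometry.angle (0 : ℂ) (z ^ (t : ℂ)) 1 := by
  obtain ⟨hθ0, hθπ⟩ := hθ
  set w := z ^ (t:ℂ) with hw
  set r := ‖z‖ with hrdef
  have hr : 0 < r := norm_pos_iff.2 hz0
  have hwre : w.re = r ^ t * Real.cos (t * z.arg) := (cpow_re' z hz0 t).1
  have hwim : w.im = r ^ t * Real.sin (t * z.arg) := (cpow_re' z hz0 t).2
  have hρ : (0:ℝ) < r ^ t := Real.rpow_pos_of_pos hr t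
  have hw0 : w ≠ 0 := by
    rw [hw, Complex.cpow_def_of_ne_zero hz0]; exact Complex.exp_ne_zero _
  clear_value w
  have hS : 0 < Real.sin θ := Real.sin_pos_of_pos_of_lt_pi hθ0 hθπ
  have hcS : Real.cos θ ^ 2 + Real.sin θ ^ 2 = 1 := by
    rw [add_comm]; exact Real.sin_sq_add_cos_sq θ
  have hc1 : Real.cos θ < 1 := by
    calc Real.cos θ < Real.cos 0 := Real.strictAntiOn_cos ⟨le_rfl, Real.pi_pos.le⟩
          ⟨hθ0.le, hθπ.le⟩ hθ0
      _ = 1 := Real.cos_zero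
  have hcm1 : -1 < Real.cos θ := by
    calc (-1:ℝ) = Real.cos π := (Real.cos_pi).symm
      _ < Real.cos θ := Real.strictAntiOn_cos ⟨hθ0.le, hθπ.le⟩ ⟨Real.pi_pos.le, le_rfl⟩ hθπ
  -- hypothesis in coordinates
  have hzre : z.re = r * Real.cos z.arg := by
    rw [Complex.cos_arg hz0]; field_simp; rfl
  have hzim : z.im = r * Real.sin z.arg := by
    rw [Complex.sin_arg]; field_simp; rfl
  have hcritz : Complex.normSq z - z.re <
      -Real.cos θ * (r * ‖(1 - z)‖) := (crit' θ ⟨hθ0, hθπ⟩ z hz0 hz1).1 hzD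
  by_cases him : z.im = 0
  · -- real positive case
    have hre0 : 0 < z.re := by
      by_contra h
      exact hzneg ⟨him, not_lt.1 h⟩
    have harg0 : z.arg = 0 := Complex.arg_eq_zero_iff.2 ⟨hre0.le, him⟩
    have hzeq : z = ((z.re : ℝ) : ℂ) := Complex.ext (Complex.ofReal_re z.re).symm (by simp [him])
    have hrre : r = z.re := by
      rw [hrdef, hzeq, Complex.norm_real, Real.norm_eq_abs, abs_of_pos hre0, Complex.ofReal_re]
    have habs1z : ‖(1 - z)‖ = |1 - z.re| := by
      rw [hzeq, show (1:ℂ) - ((z.re:ℝ):ℂ) = (((1 - z.re : ℝ)):ℂ) by push_cast; ring,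
        Complex.norm_real, Real.norm_eq_abs]
      simp
    have hnsz : Complex.normSq z = z.re ^ 2 := by
      rw [Complex.normSq_apply, him]; ring
    have hX1 : z.re < 1 := by
      rcases lt_trichotomy z.re 1 with h | h | h
      · exact h
      · exfalso; apply hz1; rw [hzeq, h]; norm_num
      · exfalso
        rw [hnsz, habs1z, hrre, abs_of_neg (by linarith : 1 - z.re < 0)] at hcritz
        nlinarith [hcritz, hcm1, mul_pos hre0 (show (0:ℝ) < z.re - 1 by linarith)]
    have hρ1 : r ^ t < 1 := Real.rpow_lt_one hr.le (by rw [hrre]; exact hX1) ht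
    have hweq : w = ((r ^ t : ℝ) : ℂ) := by
      apply Complex.ext
      · rw [hwre, harg0, mul_zero, Real.cos_zero, mul_one]; simp
      · rw [hwim, harg0, mul_zero, Real.sin_zero, mul_zero]; simp
    have hw1 : w ≠ 1 := by
      rw [hweq]
      intro h
      have : (r ^ t : ℝ) = 1 := by exact_mod_cast h
      linarith
    refine ⟨hw0, hw1, (crit' θ ⟨hθ0, hθπ⟩ w hw0 hw1).2 ?_⟩
    have e1 : Complex.normSq w = (r ^ t) ^ 2 := by
      rw [hweq, Complex.normSq_apply]; simp; ring
    have e2 : ‖w‖ = r ^ t := by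
      rw [hweq, Complex.norm_real, Real.norm_eq_abs, abs_of_pos hρ]
    have e3 : ‖(1 - w)‖ = 1 - r ^ t := by
      rw [hweq, show (1:ℂ) - ((r^t:ℝ):ℂ) = (((1 - r^t : ℝ)):ℂ) by push_cast; ring,
        Complex.norm_real, Real.norm_eq_abs, abs_of_pos (by linarith)]
    rw [e1, e2, e3, hweq]
    simp only [Complex.ofReal_re]
    nlinarith [hc1, mul_pos hρ (show (0:ℝ) < 1 - r^t by linarith)]
  · -- main case
    have hφ0 : z.arg ≠ 0 := by
      intro h
      rw [h] at hzim; simp at hzim; exact him hzim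
    have hφ : 0 < |z.arg| := abs_pos.2 hφ0
    have hφπ : |z.arg| ≤ π := Complex.abs_arg_le_pi z
    have hsinabs : Real.sin |z.arg| = |Real.sin z.arg| := by
      rcases le_or_gt 0 z.arg with h | h
      · rw [abs_of_nonneg h, abs_of_nonneg (Real.sin_nonneg_of_nonneg_of_le_pi h
          (by rw [← abs_of_nonneg h]; exact hφπ))]
      · rw [abs_of_neg h, Real.sin_neg, abs_of_nonpos]
        exact Real.sin_nonpos_of_nonpos_of_neg_pi_le h.le (by
          have := Complex.neg_pi_lt_arg z; linarith)
    have hq : 0 < Real.sin |z.arg| := by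
      rw [hsinabs, abs_pos]
      intro h
      rw [h, mul_zero] at hzim; exact him hzim
    have hs : 0 < ‖(1 - z)‖ := by
      rw [norm_pos_iff]
      intro h
      rw [sub_eq_zero] at h; exact hz1 h.symm
    have hcos : Real.cos z.arg = Real.cos |z.arg| := (Real.cos_abs z.arg).symm
    have hs2 : ‖(1-z)‖^2 = (Real.cos |z.arg| - r)^2 + Real.sin |z.arg|^2 := by
      rw [Complex.sq_norm, Complex.normSq_apply]
      have hq2 : Real.sin |z.arg|^2 = Real.sin z.arg^2 := by rw [hsinabs, sq_abs]
      have hpq : Real.sin z.arg^2 + Real.cos z.arg^2 = 1 := Real.sin_sq_add_cos_sq _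
      simp only [Complex.sub_re, Complex.sub_im, Complex.one_re, Complex.one_im]
      rw [hzre, hzim, hq2, ← hcos]; linear_combination (r^2 - 1) * hpq
    -- step 1
    have h1 : r - Real.cos |z.arg| < -Real.cos θ * ‖(1-z)‖ := by
      have hmul : r * (r - Real.cos |z.arg|) < r * (-Real.cos θ * ‖(1-z)‖) := by
        have e : r * (r - Real.cos |z.arg|) = Complex.normSq z - z.re := by
          rw [← Complex.sq_norm, hzre, hcos, ← hrdef]; ring
        rw [e, show r * (-Real.cos θ * ‖(1-z)‖)
            = -Real.cos θ * (r * ‖(1-z)‖) by ring]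
        exact hcritz
      exact lt_of_mul_lt_mul_left hmul hr.le
    have h2 : r * Real.sin θ < Real.sin (θ - |z.arg|) := by
      rw [Real.sin_sub]
      have := ineq1 (Real.cos θ) (Real.sin θ) (Real.cos |z.arg|) (Real.sin |z.arg|)
        r (‖(1-z)‖) hS hcS hq hr hs hs2 h1
      linarith
    have hφθ : |z.arg| < θ := by
      by_contra hcon
      push_neg at hcon
      have : Real.sin (θ - |z.arg|) ≤ 0 :=
        Real.sin_nonpos_of_nonpos_of_neg_pi_le (by linarith) (by linarith)
      nlinarith [mul_pos hr hS]
    have h3 : r ^ t * Real.sin θ < Real.sin (θ - t * |z.arg|) :=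
      core θ |z.arg| t r hθ0 hθπ hφ hφθ ht ht1 hr h2
    -- translate back for w
    set ψ := t * |z.arg| with hψdef
    have hψ0 : 0 < ψ := mul_pos ht hφ
    have hψπ : ψ < π := by
      have h' : ψ < 1 * |z.arg| := (mul_lt_mul_of_pos_right ht1 hφ)
      rw [one_mul] at h'
      linarith
    have hq2 : 0 < Real.sin ψ := Real.sin_pos_of_pos_of_lt_pi hψ0 hψπ
    have habsψ : |t * z.arg| = ψ := by
      rw [abs_mul, abs_of_pos ht]
    have hwre' : w.re = r ^ t * Real.cos ψ := by
      rw [hwre, ← Real.cos_abs (t * z.arg), habsψ]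
    have hwim2 : w.im^2 = (r^t)^2 * Real.sin ψ^2 := by
      have hsq : Real.sin (t*z.arg)^2 = Real.sin ψ^2 := by
        rw [← habsψ]
        rcases abs_choice (t*z.arg) with he | he
        · rw [he]
        · rw [he, Real.sin_neg]; ring
      rw [hwim, mul_pow, hsq]
    have hwim0 : w.im ≠ 0 := by
      intro h
      rw [h] at hwim2
      simp at hwim2
      rcases hwim2 with h' | h'
      · exact absurd h' hρ.ne'
      · exact absurd h' hq2.ne'
    have hw1 : w ≠ 1 := by
      intro h; rw [h] at hwim0; exact hwim0 Complex.one_im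
    have hs' : 0 < ‖(1 - w)‖ := by
      rw [norm_pos_iff]
      intro h; rw [sub_eq_zero] at h; exact hw1 h.symm
    have hs2' : ‖(1-w)‖^2 = (Real.cos ψ - r^t)^2 + Real.sin ψ^2 := by
      rw [Complex.sq_norm, Complex.normSq_apply]
      simp only [Complex.sub_re, Complex.sub_im, Complex.one_re, Complex.one_im]
      have hpq : Real.sin ψ^2 + Real.cos ψ^2 = 1 := Real.sin_sq_add_cos_sq _
      rw [hwre']
      linear_combination hwim2 + ((r^t)^2 - 1) * hpq
    have h4 : r^t * Real.sin θ < Real.sin θ * Real.cos ψ - Real.cos θ * Real.sin ψ := by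
      rw [Real.sin_sub] at h3; linarith
    have h5 : r^t - Real.cos ψ < -Real.cos θ * ‖(1-w)‖ :=
      ineq2 (Real.cos θ) (Real.sin θ) (Real.cos ψ) (Real.sin ψ) (r^t)
        (‖(1-w)‖) hS hcS hq2 hρ hs' hs2' (by linarith)
    have hnsq : Complex.normSq w = (r^t)^2 := by
      rw [Complex.normSq_apply, hwre']
      linear_combination hwim2 + (r^t)^2 * (Real.sin_sq_add_cos_sq ψ)
    have habsw : ‖w‖ = r ^ t := by
      rw [Complex.norm_def, hnsq, Real.sqrt_sq hρ.le]
    refine ⟨hw0, hw1, (crit' θ ⟨hθ0, hθπ⟩ w hw0 hw1).2 ?_⟩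
    rw [hnsq, habsw, hwre']
    calc (r^t)^2 - r^t * Real.cos ψ = r^t * (r^t - Real.cos ψ) := by ring
      _ < r^t * (-Real.cos θ * ‖(1-w)‖) := mul_lt_mul_of_pos_left h5 hρ
      _ = -Real.cos θ * (r^t * ‖(1-w)‖) := by ring
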